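/- Let ξ ∈ ℝ and let X : ℝ → ℝ be a differentiable function satisfying (X'(t))² = 2·X(t)·(1 − ξ − 2X(t) + 2X(t)²)·(2ξ − 1 + 2X(t) − 3X(t)²) for all t, with X' differentiable where needed only through X (no further hypotheses). Define Υ(t) = −27·X(t)³ + 27·X(t)² − (27(1−ξ)/2)·X(t). Then for all t ∈ ℝ: (Υ'(t))² = 4·Υ(t)³ + (20 − 36ξ)·Υ(t)² − 27·(2ξ−1)·(ξ−1)²·Υ(t). Hence the (generically genus-2 hyperelliptic) parametrization (X, X') reduces to the Weierstrass-type elliptic equation for Υ. -/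

import Mathlib

/-- the cubic change of variable
`Υ = −27X³ + 27X² − (27(1−ξ)/2)X` reduces the hyperelliptic equation
`X'² = 2X(1−ξ−2X+2X²)(2ξ−1+2X−3X²)` to the Weierstrass-type equation
`Υ'² = 4Υ³ + (20−36ξ)Υ² − 27(2ξ−1)(ξ−1)²Υ`. -/
theorem stmt_11 (ξ : ℝ) (X : ℝ → ℝ) (hX : Differentiable ℝ X)
    (hode : ∀ t : ℝ, (deriv X t) ^ 2 =
      2 * X t * (1 - ξ - 2 * X t + 2 * X t ^ 2) * (2 * ξ - 1 + 2 * X t - 3 * X t ^ 2))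
    (Υ : ℝ → ℝ)
    (hΥ : ∀ t : ℝ, Υ t = -27 * X t ^ 3 + 27 * X t ^ 2 - 27 * (1 - ξ) / 2 * X t) :
    ∀ t : ℝ, (deriv Υ t) ^ 2 =
      4 * Υ t ^ 3 + (20 - 36 * ξ) * Υ t ^ 2 - 27 * (2 * ξ - 1) * (ξ - 1) ^ 2 * Υ t := by
  intro t
  have hΥfun : Υ = fun t => -27 * X t ^ 3 + 27 * X t ^ 2 - 27 * (1 - ξ) / 2 * X t :=
    funext hΥ
  have hd : HasDerivAt X (deriv X t) t := (hX t).hasDerivAt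
  have hΥd : HasDerivAt Υ ((-81 * X t ^ 2 + 54 * X t - 27 * (1 - ξ) / 2) * deriv X t) t := by
    rw [hΥfun]
    have h := (((hd.pow 3).const_mul (-27 : ℝ)).add ((hd.pow 2).const_mul (27 : ℝ))).sub
      (hd.const_mul (27 * (1 - ξ) / 2))
    refine h.congr_deriv ?_
    push_cast
    ring
  rw [hΥd.deriv, hΥ t]
  linear_combination (-81 * X t ^ 2 + 54 * X t - 27 * (1 - ξ) / 2) ^ 2 * hode t
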